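/- Fix integers 1 ≤ r ≤ n. Let μ and ν be partitions with at most r parts, all parts at most n − r. Then the coefficient of the monomial x₁^{n−1}·x₂^{n−1}⋯x_r^{n−1} in the polynomial D_{μ+δ} · D_{ν+δ} ∈ ℂ[x₁,…,x_r] equals (−1)^{r(r−1)/2} · r! if ν = μ̌ (i.e. ν_i = (n−r) − μ_{r+1−i} for all 1 ≤ i ≤ r), and equals 0 otherwise. -/

import Mathlib

open Finset MvPolynomial
open scoped Classical

/-- `Dalpha r α = det (xᵢ^{αⱼ})_{1 ≤ i,j ≤ r}`. -/
noncomputable def Dalpha (r : ℕ) (α : Fin r → ℕ) : MvPolynomial (Fin r) ℂ :=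
  Matrix.det (Matrix.of fun i j : Fin r => X i ^ α j)


section Aux

lemma perm_strictMono_eq_one {r : ℕ} (π : Equiv.Perm (Fin r)) (h : StrictMono ⇑π) :
    π = 1 := by
  have hsymm : StrictMono ⇑π.symm := by
    intro a b hab
    rcases lt_trichotomy (π.symm a) (π.symm b) with h1 | h1 | h1
    · exact h1
    · exact absurd (π.symm.injective h1 ▸ rfl : a = b) hab.ne
    · exact absurd (by simpa using h h1) (by simp [hab.le, not_lt.mpr hab.le])
  apply Equiv.ext
  intro x
  have hwf : WellFoundedLT (Fin r) := inferInstance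
  have h1 : x ≤ π x := h.le_apply
  have h2 : π x ≤ x := by
    have h3 := hsymm.le_apply (x := π x)
    simpa using h3
  simpa using le_antisymm h2 h1

lemma perm_strictAnti_eq_rev {r : ℕ} (π : Equiv.Perm (Fin r))
    (h : ∀ {j j' : Fin r}, j < j' → π j' < π j) : π = Fin.revPerm := by
  have hrr : (Fin.revPerm : Equiv.Perm (Fin r)) * Fin.revPerm = 1 := by
    apply Equiv.ext; intro x; simp [Fin.rev_rev]
  have h1 : π * Fin.revPerm = 1 := by
    apply perm_strictMono_eq_one
    intro j j' hlt
    simp only [Equiv.Perm.mul_apply, Fin.revPerm_apply]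
    exact h (Fin.rev_lt_rev.mpr hlt)
  calc π = π * Fin.revPerm * Fin.revPerm := by rw [mul_assoc, hrr, mul_one]
    _ = Fin.revPerm := by rw [h1, one_mul]

lemma sign_revPerm_aux (n : ℕ) :
    Equiv.Perm.sign (Fin.revPerm : Equiv.Perm (Fin n)) = (-1 : ℤˣ) ^ (n * (n-1) / 2) := by
  induction n with
  | zero => simp [Subsingleton.elim (Fin.revPerm : Equiv.Perm (Fin 0)) 1]
  | succ n ih =>
    match n, ih with
    | 0, _ => simp [Subsingleton.elim (Fin.revPerm : Equiv.Perm (Fin 1)) 1]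
    | (m+1), ih =>
      have key : (Fin.revPerm : Equiv.Perm (Fin (m+2))) =
          Equiv.Perm.decomposeFin.symm (Fin.last (m+1), (finRotate (m+1))⁻¹ * Fin.revPerm) := by
        ext x
        refine Fin.cases ?_ (fun x => ?_) x
        · simp [Fin.rev_zero]
        · rw [Equiv.Perm.decomposeFin_symm_apply_succ]
          simp only [Equiv.Perm.mul_apply, Fin.revPerm_apply]
          have hinv : ∀ y z : Fin (m+1), finRotate (m+1) z = y → (finRotate (m+1))⁻¹ y = z := by
            intro y z h; rw [← h]; exact (finRotate (m+1)).symm_apply_apply z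
          rcases eq_or_ne x (Fin.last m) with rfl | hx
          · rw [Fin.rev_last, hinv 0 (Fin.last m) (by
              rw [finRotate_succ_apply]
              ext
              simp [Fin.add_def])]
            rw [Fin.succ_last, Equiv.swap_apply_right, Fin.rev_last]
          · have hxm : (x : ℕ) < m := by
              have := x.isLt
              rcases Nat.lt_or_ge (x : ℕ) m with h | h
              · exact h
              · exact absurd (Fin.ext (by omega : (x:ℕ) = m)) hx
            have hone : ((1 : Fin (m+1)) : ℕ) = 1 := by
              rw [Fin.val_one']
              exact Nat.mod_eq_of_lt (by omega)
            have h1 : (finRotate (m+1))⁻¹ x.rev = ⟨m - 1 - (x : ℕ), by omega⟩ := by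
              apply hinv
              rw [finRotate_succ_apply]
              ext
              simp only [Fin.add_def, Fin.val_rev, Fin.val_mk, hone]
              rw [Nat.mod_eq_of_lt (by omega)]
              omega
            rw [h1]
            rw [Equiv.swap_apply_of_ne_of_ne (Fin.succ_ne_zero _) (by
              simp only [ne_eq, Fin.ext_iff, Fin.val_succ, Fin.val_last, Fin.val_mk]
              omega)]
            simp only [Fin.val_rev, Fin.val_succ, Fin.val_mk]
            omega
      rw [key, Equiv.Perm.decomposeFin.symm_sign]
      rw [if_neg (by simp [Fin.ext_iff])]
      rw [map_mul, map_inv, sign_finRotate, ih]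
      have h2 : (m+2) * (m+2-1) / 2 = (m+1)*(m+1-1)/2 + (m+1) := by
        show (m+2)*(m+1)/2 = (m+1)*m/2 + (m+1)
        have : (m+2)*(m+1) = (m+1)*m + 2*(m+1) := by ring
        omega
      rw [h2, pow_add, pow_succ, ← inv_pow, inv_neg, inv_one]
      simp [mul_comm, mul_assoc, mul_left_comm]


lemma prod_X_pow_univ {r : ℕ} (f : Fin r → ℕ) :
    ∏ k : Fin r, (X k ^ f k : MvPolynomial (Fin r) ℂ) =
      monomial (Finsupp.equivFunOnFinite.symm f) 1 := by
  set s : Fin r →₀ ℕ := Finsupp.equivFunOnFinite.symm f with hs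
  calc ∏ k : Fin r, (X k ^ f k : MvPolynomial (Fin r) ℂ)
      = ∏ k : Fin r, (X k ^ s k : MvPolynomial (Fin r) ℂ) := by
        refine Finset.prod_congr rfl fun k _ => ?_
        simp [hs]
    _ = ∏ k ∈ s.support, (X k ^ s k : MvPolynomial (Fin r) ℂ) :=
        (Finset.prod_subset (Finset.subset_univ _) (fun x _ hx => by
          rw [Finsupp.notMem_support_iff.mp hx, pow_zero])).symm
    _ = monomial s 1 := prod_X_pow_eq_monomial

lemma Dalpha_eq (r : ℕ) (α : Fin r → ℕ) :
    Dalpha r α = ∑ σ : Equiv.Perm (Fin r),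
      monomial (Finsupp.equivFunOnFinite.symm fun k => α (σ.symm k))
        (((Equiv.Perm.sign σ : ℤ) : ℂ)) := by
  rw [Dalpha, Matrix.det_apply']
  refine Finset.sum_congr rfl fun σ _ => ?_
  have h1 : ∏ i : Fin r, (Matrix.of fun i j : Fin r => (X i ^ α j : MvPolynomial (Fin r) ℂ)) (σ i) i
      = monomial (Finsupp.equivFunOnFinite.symm fun k => α (σ.symm k)) 1 := by
    rw [← prod_X_pow_univ fun k => α (σ.symm k), ← Equiv.prod_comp σ
      (fun k => (X k ^ α (σ.symm k) : MvPolynomial (Fin r) ℂ))]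
    refine Finset.prod_congr rfl fun i _ => ?_
    simp
  rw [h1, ← (map_intCast (C : ℂ →+* MvPolynomial (Fin r) ℂ) ((Equiv.Perm.sign σ : ℤ))),
    C_mul_monomial, mul_one]

end Aux

/-- Orthogonality from Section 2: for partitions `μ, ν` in the `r × (n-r)` rectangle,
the coefficient of `x₁^{n-1} ⋯ x_r^{n-1}` in `D_{μ+δ} · D_{ν+δ}` is
`(-1)^{r(r-1)/2} r!` if `ν = μ̌` (the complement of `μ` in the rectangle,
`νᵢ = (n-r) - μ_{r+1-i}`), and is `0` otherwise. -/
theorem schur_orthogonality (n r : ℕ) (hr : 1 ≤ r) (hrn : r ≤ n)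
    (μ ν : Fin r → ℕ) (hμa : Antitone μ) (hνa : Antitone ν)
    (hμ : ∀ i, μ i ≤ n - r) (hν : ∀ i, ν i ≤ n - r) :
    MvPolynomial.coeff (Finsupp.equivFunOnFinite.symm fun _ : Fin r => n - 1)
        (Dalpha r (fun j => μ j + (r - 1 - (j : ℕ))) *
          Dalpha r (fun j => ν j + (r - 1 - (j : ℕ)))) =
      if ∀ i : Fin r, ν i = (n - r) - μ i.rev then
        (-1 : ℂ) ^ (r * (r - 1) / 2) * (r.factorial : ℂ)
      else 0 := by
  set a : Fin r → ℕ := fun j => μ j + (r - 1 - (j : ℕ)) with ha_def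
  set b : Fin r → ℕ := fun j => ν j + (r - 1 - (j : ℕ)) with hb_def
  set d : Fin r →₀ ℕ := Finsupp.equivFunOnFinite.symm fun _ : Fin r => n - 1 with hd_def
  have ha_anti : ∀ {j j' : Fin r}, j < j' → a j' < a j := by
    intro j j' hjj
    have h1 : μ j' ≤ μ j := hμa hjj.le
    have h2 : (j : ℕ) < (j' : ℕ) := hjj
    have h3 : (j' : ℕ) < r := j'.isLt
    simp only [ha_def]
    omega
  have hb_anti : ∀ {j j' : Fin r}, j < j' → b j' < b j := by
    intro j j' hjj
    have h1 : ν j' ≤ ν j := hνa hjj.le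
    have h2 : (j : ℕ) < (j' : ℕ) := hjj
    have h3 : (j' : ℕ) < r := j'.isLt
    simp only [hb_def]
    omega
  set Q : Prop := ∀ i : Fin r, ν i = (n - r) - μ i.rev with hQ_def
  have hrr : (Fin.revPerm : Equiv.Perm (Fin r)) * Fin.revPerm = 1 := by
    apply Equiv.ext; intro x; simp [Fin.rev_rev]
  -- the key combinatorial equivalence
  have key : ∀ σ τ : Equiv.Perm (Fin r),
      ((Finsupp.equivFunOnFinite.symm fun k => a (σ.symm k)) +
        (Finsupp.equivFunOnFinite.symm fun k => b (τ.symm k)) = d) ↔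
      (τ = σ * Fin.revPerm ∧ Q) := by
    intro σ τ
    have hcond : ((Finsupp.equivFunOnFinite.symm fun k => a (σ.symm k)) +
        (Finsupp.equivFunOnFinite.symm fun k => b (τ.symm k)) = d) ↔
        ∀ k : Fin r, a (σ.symm k) + b (τ.symm k) = n - 1 := by
      constructor
      · intro h k
        have := DFunLike.congr_fun h k
        simpa [hd_def] using this
      · intro h
        ext k
        simpa [hd_def] using h k
    rw [hcond]
    constructor
    · intro hC
      have hP : ∀ j : Fin r, a j + b ((τ⁻¹ * σ) j) = n - 1 := by
        intro j
        have := hC (σ j)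
        simpa using this
      have hπ : (τ⁻¹ * σ : Equiv.Perm (Fin r)) = Fin.revPerm := by
        apply perm_strictAnti_eq_rev
        intro j j' hjj
        have h1 : a j' < a j := ha_anti hjj
        have h2 := hP j
        have h3 := hP j'
        by_contra hcon
        push_neg at hcon
        rcases eq_or_lt_of_le hcon with heq | hlt
        · exact hjj.ne' ((τ⁻¹ * σ).injective heq.symm)
        · have h4 := hb_anti hlt
          omega
      have hA : ∀ j : Fin r, a j + b j.rev = n - 1 := by
        intro j
        have := hP j
        rwa [hπ] at this
      constructor
      · have hσ : σ = τ * Fin.revPerm := by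
          rw [← hπ, ← mul_assoc, mul_inv_cancel, one_mul]
        rw [hσ, mul_assoc, hrr, mul_one]
      · intro i
        have h1 := hA i.rev
        have h2 : ((i.rev : Fin r) : ℕ) = r - 1 - (i : ℕ) := by
          rw [Fin.val_rev]
          omega
        rw [Fin.rev_rev] at h1
        simp only [ha_def, hb_def] at h1
        rw [h2] at h1
        have h3 := hμ i.rev
        have h4 := hν i
        have h5 : (i : ℕ) < r := i.isLt
        omega
    · rintro ⟨rfl, hQ⟩
      intro k
      have hτs : ((σ * Fin.revPerm : Equiv.Perm (Fin r)))⁻¹ k = Fin.rev (σ.symm k) := by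
        rw [mul_inv_rev]
        have : (Fin.revPerm : Equiv.Perm (Fin r))⁻¹ = Fin.revPerm := by
          rw [eq_comm, eq_inv_iff_mul_eq_one, hrr]
        rw [this]
        rfl
      show a (σ.symm k) + b (((σ * Fin.revPerm : Equiv.Perm (Fin r)))⁻¹ k) = n - 1
      rw [hτs]
      set j := σ.symm k
      have h1 := hQ j.rev
      rw [Fin.rev_rev] at h1
      have h2 : ((j.rev : Fin r) : ℕ) = r - 1 - (j : ℕ) := by
        rw [Fin.val_rev]; omega
      simp only [ha_def, hb_def]
      rw [h2, h1]
      have h3 := hμ j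
      have h4 : (j : ℕ) < r := j.isLt
      omega
  -- expand the coefficient as a double sum
  rw [Dalpha_eq, Dalpha_eq, Finset.sum_mul_sum]
  rw [MvPolynomial.coeff_sum]
  have hterm : ∀ σ τ : Equiv.Perm (Fin r),
      MvPolynomial.coeff d
        (monomial (Finsupp.equivFunOnFinite.symm fun k => a (σ.symm k))
            (((Equiv.Perm.sign σ : ℤ) : ℂ)) *
          monomial (Finsupp.equivFunOnFinite.symm fun k => b (τ.symm k))
            (((Equiv.Perm.sign τ : ℤ) : ℂ))) =
      if (τ = σ * Fin.revPerm ∧ Q) then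
        ((Equiv.Perm.sign σ : ℤ) : ℂ) * ((Equiv.Perm.sign τ : ℤ) : ℂ) else 0 := by
    intro σ τ
    rw [monomial_mul, coeff_monomial]
    exact if_congr (key σ τ) rfl rfl
  calc (∑ σ : Equiv.Perm (Fin r), MvPolynomial.coeff d
          (∑ τ : Equiv.Perm (Fin r),
            monomial (Finsupp.equivFunOnFinite.symm fun k => a (σ.symm k))
                (((Equiv.Perm.sign σ : ℤ) : ℂ)) *
              monomial (Finsupp.equivFunOnFinite.symm fun k => b (τ.symm k))
                (((Equiv.Perm.sign τ : ℤ) : ℂ))))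
      = ∑ σ : Equiv.Perm (Fin r), ∑ τ : Equiv.Perm (Fin r),
          if (τ = σ * Fin.revPerm ∧ Q) then
            ((Equiv.Perm.sign σ : ℤ) : ℂ) * ((Equiv.Perm.sign τ : ℤ) : ℂ) else 0 := by
        refine Finset.sum_congr rfl fun σ _ => ?_
        rw [MvPolynomial.coeff_sum]
        exact Finset.sum_congr rfl fun τ _ => hterm σ τ
    _ = if Q then (-1 : ℂ) ^ (r * (r - 1) / 2) * (r.factorial : ℂ) else 0 := by
        by_cases hQ : Q
        · rw [if_pos hQ]
          have hstep : ∀ σ : Equiv.Perm (Fin r),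
              (∑ τ : Equiv.Perm (Fin r),
                if (τ = σ * Fin.revPerm ∧ Q) then
                  ((Equiv.Perm.sign σ : ℤ) : ℂ) * ((Equiv.Perm.sign τ : ℤ) : ℂ) else 0) =
              (-1 : ℂ) ^ (r * (r - 1) / 2) := by
            intro σ
            have h1 : (∑ τ : Equiv.Perm (Fin r),
                if (τ = σ * Fin.revPerm ∧ Q) then
                  ((Equiv.Perm.sign σ : ℤ) : ℂ) * ((Equiv.Perm.sign τ : ℤ) : ℂ) else 0) =
                ∑ τ : Equiv.Perm (Fin r),
                if (τ = σ * Fin.revPerm) then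
                  ((Equiv.Perm.sign σ : ℤ) : ℂ) * ((Equiv.Perm.sign τ : ℤ) : ℂ) else 0 := by
              refine Finset.sum_congr rfl fun τ _ => ?_
              exact if_congr (and_iff_left hQ) rfl rfl
            rw [h1, Finset.sum_ite_eq' Finset.univ (σ * Fin.revPerm)
              (fun τ => ((Equiv.Perm.sign σ : ℤ) : ℂ) * ((Equiv.Perm.sign τ : ℤ) : ℂ))]
            rw [if_pos (Finset.mem_univ _)]
            rw [map_mul]
            have hsq : ((Equiv.Perm.sign σ : ℤ) : ℂ) * ((Equiv.Perm.sign σ : ℤ) : ℂ) = 1 := by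
              rw [← Int.cast_mul, ← Units.val_mul, ← sq, Int.units_sq, Units.val_one,
                Int.cast_one]
            have hrev : (((Equiv.Perm.sign (Fin.revPerm : Equiv.Perm (Fin r)) : ℤ)) : ℂ) =
                (-1 : ℂ) ^ (r * (r - 1) / 2) := by
              rw [sign_revPerm_aux]
              push_cast
              ring
            calc ((Equiv.Perm.sign σ : ℤ) : ℂ) *
                  (((Equiv.Perm.sign σ * Equiv.Perm.sign (Fin.revPerm : Equiv.Perm (Fin r)) : ℤˣ) : ℤ) : ℂ)
                = (((Equiv.Perm.sign σ : ℤ) : ℂ) * ((Equiv.Perm.sign σ : ℤ) : ℂ)) *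
                  (((Equiv.Perm.sign (Fin.revPerm : Equiv.Perm (Fin r)) : ℤ)) : ℂ) := by
                  push_cast
                  ring
              _ = (-1 : ℂ) ^ (r * (r - 1) / 2) := by rw [hsq, one_mul, hrev]
          rw [Finset.sum_congr rfl fun σ _ => hstep σ]
          rw [Finset.sum_const, Finset.card_univ, Fintype.card_perm, Fintype.card_fin,
            nsmul_eq_mul]
          ring
        · rw [if_neg hQ]
          refine Finset.sum_eq_zero fun σ _ => Finset.sum_eq_zero fun τ _ => ?_
          rw [if_neg (fun h => hQ h.2)]
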